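/- Let c ∈ F∖{0}, j ≥ 1 an integer, d ∈ K with d ≠ 0, and let L ⊂ ℤ be a finite set with elements a_ℓ ∈ K for ℓ ∈ L. Set f = Σ_{ℓ∈L} a_ℓ / σ^ℓ(d)^j and a = Σ_{ℓ∈L} c^{−ℓ}·σ^{−ℓ}(a_ℓ). Then there exists g ∈ K such that f = (c·σ(g) − g) + a/d^j; in particular, f − a/d^j is cσ-summable in K. -/

import Mathlib

open MvPolynomial

/-- `K F n` is the rational function field `F(α₁,…,αₙ)`. -/
abbrev K (F : Type*) [Field F] (n : ℕ) := FractionRing (MvPolynomial (Fin n) F)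

/-- The canonical image of the variable `αᵢ` in `K F n`. -/
noncomputable def α {F : Type*} [Field F] {n : ℕ} (i : Fin n) : K F n :=
  algebraMap (MvPolynomial (Fin n) F) (K F n) (X i)

set_option maxHeartbeats 1000000 in
/-- Let `σ` be the `F`-algebra automorphism of `K = F(α₁,…,αₙ)` with
`σ(αᵢ) = λᵢ αᵢ` (all `λᵢ` nonzero). Let `c ∈ F∖{0}`, `j ≥ 1`, `d ∈ K∖{0}`, `L ⊂ ℤ` finite
and `a_ℓ ∈ K` for `ℓ ∈ L`. Set `f = ∑_{ℓ∈L} a_ℓ/σ^ℓ(d)^j` and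
`a = ∑_{ℓ∈L} c^{−ℓ}·σ^{−ℓ}(a_ℓ)`. Then there exists `g ∈ K` with
`f = (c·σ(g) − g) + a/d^j`; in particular `f − a/d^j` is `cσ`-summable in `K`. -/
theorem stmt_10 {F : Type*} [Field F] [Algebra F (AlgebraicClosure ℚ)]
    {n : ℕ} (hn : 1 ≤ n)
    (lam : Fin n → F) (hlam : ∀ i, lam i ≠ 0)
    (σ : K F n ≃ₐ[F] K F n)
    (hσ : ∀ i, σ (α i) = algebraMap F (K F n) (lam i) * α i)
    (c : F) (hc : c ≠ 0) (j : ℕ) (hj : 1 ≤ j)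
    (d : K F n) (hd : d ≠ 0)
    (L : Finset ℤ) (a : ℤ → K F n) :
    ∃ g : K F n,
      (∑ ℓ ∈ L, a ℓ / ((σ ^ ℓ) d) ^ j) =
        (algebraMap F (K F n) c * σ g - g) +
          (∑ ℓ ∈ L, algebraMap F (K F n) (c ^ (-ℓ)) * (σ ^ (-ℓ)) (a ℓ)) / d ^ j := by
  classical
  set u : ℤ → K F n → K F n :=
    fun m h => algebraMap F (K F n) (c ^ (-m)) * (σ ^ (-m)) h with hu
  have hstep : ∀ (m : ℤ) (h : K F n),
      u m h - u (m + 1) h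
        = algebraMap F (K F n) c * σ (u (m + 1) h) - u (m + 1) h := by
    intro m h
    have h1 : σ ((σ ^ (-(m + 1))) h) = (σ ^ (-m)) h := by
      rw [← AlgEquiv.mul_apply, ← zpow_one_add]
      congr 1
      ring_nf
    have h2 : c * c ^ (-(m + 1)) = c ^ (-m) := by
      rw [show (-m : ℤ) = 1 + -(m + 1) by ring, zpow_add₀ hc, zpow_one]
    simp only [hu, map_mul, AlgEquiv.commutes, h1]
    rw [← mul_assoc, ← map_mul, h2]
  have key : ∀ (k : ℤ) (h : K F n), ∃ g : K F n,
      h = (algebraMap F (K F n) c * σ g - g) + u k h := by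
    intro k
    induction k using Int.induction_on with
    | zero =>
      intro h
      refine ⟨0, ?_⟩
      simp [hu]
      rfl
    | succ k ih =>
      intro h
      obtain ⟨g, hg⟩ := ih h
      refine ⟨g + u (k + 1) h, ?_⟩
      have hs := hstep k h
      rw [map_add, mul_add]
      linear_combination hg + hs
    | pred k ih =>
      intro h
      obtain ⟨g, hg⟩ := ih h
      refine ⟨g - u (-k) h, ?_⟩
      have hs := hstep (-(k : ℤ) - 1) h
      have e : (-(k : ℤ) - 1) + 1 = -k := by ring
      rw [e] at hs
      rw [map_sub, mul_sub]
      linear_combination hg - hs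
  have term : ∀ ℓ : ℤ, ∃ g : K F n,
      a ℓ / ((σ ^ ℓ) d) ^ j =
        (algebraMap F (K F n) c * σ g - g) +
          algebraMap F (K F n) (c ^ (-ℓ)) * (σ ^ (-ℓ)) (a ℓ) / d ^ j := by
    intro ℓ
    obtain ⟨g, hg⟩ := key ℓ (a ℓ / ((σ ^ ℓ) d) ^ j)
    refine ⟨g, ?_⟩
    have hinv : (σ ^ (-ℓ)) ((σ ^ ℓ) d) = d := by
      rw [← AlgEquiv.mul_apply, ← zpow_add, neg_add_cancel, zpow_zero, AlgEquiv.one_apply]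
    have hterm : u ℓ (a ℓ / ((σ ^ ℓ) d) ^ j)
        = algebraMap F (K F n) (c ^ (-ℓ)) * (σ ^ (-ℓ)) (a ℓ) / d ^ j := by
      simp only [hu, map_div₀, map_pow, hinv]
      ring
    rw [hterm] at hg
    exact hg
  choose G hG using term
  refine ⟨∑ ℓ ∈ L, G ℓ, ?_⟩
  rw [map_sum, Finset.mul_sum, Finset.sum_div, ← Finset.sum_sub_distrib,
    ← Finset.sum_add_distrib]
  exact Finset.sum_congr rfl fun ℓ _ => hG ℓ
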